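/- Let n ≥ 2 and let Φ⁺ = {[i,j] : 1 ≤ i < j ≤ n} denote the type A_{n−1} root poset, where [i,j] denotes ε_i − ε_j and the order is generated by the covering relations [i,j] ⋖ [l,m] iff (i = l and m = j+1) or (l = i−1 and j = m). For 0 ≤ k ≤ n−1, let * be the map sending an antichain A = {[i_1,j_1],…,[i_k,j_k]} ∈ A_k(Φ⁺) to the unique antichain A* ∈ A_{n−1−k}(Φ⁺) whose elements [i'_1,j'_1],…,[i'_{n−1−k},j'_{n−1−k}] satisfy {i'_1,…,i'_{n−1−k}} = {1,…,n−1} \ {j_1−1,…,j_k−1}, {j'_1,…,j'_{n−1−k}} = {2,…,n} \ {i_1+1,…,i_k+1}, with i'_1 < ⋯ < i'_{n−1−k} and j'_1 < ⋯ < j'_{n−1−k}. Then * is a poset isomorphism from (A_k(Φ⁺), ≤_k) to (A_{n−1−k}(Φ⁺), ≤_{n−1−k}); in particular, if A' ⋖ A in A_k(Φ⁺), then A'* ⋖ A* in A_{n−1−k}(Φ⁺). -/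

import Mathlib

/-- The type `A_{n-1}` root poset: elements `[i,j]` for `1 ≤ i < j ≤ n`
(representing `εᵢ - εⱼ`). -/
def RootA (n : ℕ) : Type := {p : ℕ × ℕ // 1 ≤ p.1 ∧ p.1 < p.2 ∧ p.2 ≤ n}

/-- First index of a root `[i,j]`. -/
def RootA.fst {n : ℕ} (x : RootA n) : ℕ := (Subtype.val x).1

/-- Second index of a root `[i,j]`. -/
def RootA.snd {n : ℕ} (x : RootA n) : ℕ := (Subtype.val x).2

/-- The root poset order: `[i,j] ≤ [l,m]` iff `l ≤ i` and `j ≤ m`. -/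
instance {n : ℕ} : PartialOrder (RootA n) where
  le x y := y.fst ≤ x.fst ∧ x.snd ≤ y.snd
  le_refl x := ⟨le_refl _, le_refl _⟩
  le_trans x y z h₁ h₂ := ⟨le_trans h₂.1 h₁.1, le_trans h₁.2 h₂.2⟩
  le_antisymm x y h₁ h₂ :=
    Subtype.ext (Prod.ext (le_antisymm h₂.1 h₁.1) (le_antisymm h₁.2 h₂.2))


/-- `A_k(P)`: the set of antichains of `P` of cardinality exactly `k`. -/
def AkSet (P : Type*) [PartialOrder P] (k : ℕ) : Type _ :=
  {A : Finset P // IsAntichain (· ≤ ·) (A : Set P) ∧ A.card = k}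

/-- The underlying finite set of elements of an antichain in `A_k(P)`. -/
def AkSet.carrier {P : Type*} [PartialOrder P] {k : ℕ} (A : AkSet P k) : Finset P :=
  Subtype.val A

/-- `A ≺_k B` iff `A \ B = {a}` and `B \ A = {b}` are singletons with `a <_P b`. -/
def PrecK {P : Type*} [PartialOrder P] {k : ℕ} (A B : AkSet P k) : Prop :=
  ∃ a b : P,
    ((A.carrier : Set P) \ (B.carrier : Set P)) = {a} ∧
    ((B.carrier : Set P) \ (A.carrier : Set P)) = {b} ∧ a < b

/-- `≤_k`: the reflexive transitive closure of `≺_k` on `A_k(P)`. -/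
def LeK {P : Type*} [PartialOrder P] {k : ℕ} : AkSet P k → AkSet P k → Prop :=
  Relation.ReflTransGen PrecK

/-- `A_k(P)` is equipped with the order `≤_k`. -/
instance {P : Type*} [PartialOrder P] {k : ℕ} : LE (AkSet P k) := ⟨LeK⟩

/-- The strict order associated to `≤_k`. -/
def LtK {P : Type*} [PartialOrder P] {k : ℕ} (A B : AkSet P k) : Prop :=
  LeK A B ∧ A ≠ B

/-- The covering relation of the poset `(A_k(P), ≤_k)`. -/
def CovK {P : Type*} [PartialOrder P] {k : ℕ} (A B : AkSet P k) : Prop :=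
  LtK A B ∧ ∀ C : AkSet P k, LtK A C → ¬ LtK C B

open Finset

namespace Pany

/-- count of elements ≤ m -/
def cnt (S : Finset ℕ) (m : ℕ) : ℕ := (S.filter (fun x => x ≤ m)).card

lemma lowerset_mem_iff {k : ℕ} (D : Finset (Fin k))
    (hD : ∀ r r' : Fin k, r' ≤ r → r ∈ D → r' ∈ D) (r : Fin k) :
    r ∈ D ↔ (r : ℕ) < D.card := by
  constructor
  · intro hr
    have hsub : Finset.Iic r ⊆ D := fun r' hr' => hD r r' (Finset.mem_Iic.1 hr') hr
    have := Finset.card_le_card hsub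
    rw [Fin.card_Iic] at this
    omega
  · intro hr
    by_contra hmem
    have hsub : D ⊆ Finset.Iio r := by
      intro d hd
      rw [Finset.mem_Iio]
      by_contra hdr
      exact hmem (hD d r (le_of_not_gt hdr) hd)
    have := Finset.card_le_card hsub
    rw [Fin.card_Iio] at this
    omega

lemma cnt_eq_card_filter {k : ℕ} {S : Finset ℕ} (hS : S.card = k) (m : ℕ) :
    cnt S m = (univ.filter (fun r : Fin k => S.orderEmbOfFin hS r ≤ m)).card := by
  rw [cnt]
  rw [show S.filter (fun x => x ≤ m)
      = (univ.filter (fun r : Fin k => S.orderEmbOfFin hS r ≤ m)).image (S.orderEmbOfFin hS) by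
    ext x
    simp only [mem_image, mem_filter, mem_univ, true_and]
    constructor
    · rintro ⟨hx, hxm⟩
      have : x ∈ Set.range (S.orderEmbOfFin hS) := by rw [range_orderEmbOfFin]; exact hx
      obtain ⟨r, rfl⟩ := this
      exact ⟨r, hxm, rfl⟩
    · rintro ⟨r, hrm, rfl⟩
      exact ⟨orderEmbOfFin_mem _ _ _, hrm⟩]
  rw [Finset.card_image_of_injective _ (S.orderEmbOfFin hS).injective]

lemma orderEmb_le_iff {k : ℕ} {S : Finset ℕ} (hS : S.card = k) (m : ℕ) (r : Fin k) :
    S.orderEmbOfFin hS r ≤ m ↔ (r : ℕ) < cnt S m := by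
  rw [cnt_eq_card_filter hS m]
  rw [← lowerset_mem_iff (univ.filter (fun r : Fin k => S.orderEmbOfFin hS r ≤ m))
      (fun a b hba ha => by
        simp only [mem_filter, mem_univ, true_and] at *
        exact le_trans ((S.orderEmbOfFin hS).monotone hba) ha) r]
  simp

lemma pointwise_of_cnt {k : ℕ} {S T : Finset ℕ} (hS : S.card = k) (hT : T.card = k)
    (h : ∀ m, cnt S m ≤ cnt T m) (t : Fin k) :
    T.orderEmbOfFin hT t ≤ S.orderEmbOfFin hS t := by
  rw [orderEmb_le_iff hT]
  exact lt_of_lt_of_le ((orderEmb_le_iff hS _ t).1 le_rfl) (h _)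

lemma cnt_of_pointwise {k : ℕ} {S T : Finset ℕ} (hS : S.card = k) (hT : T.card = k)
    (h : ∀ t : Fin k, T.orderEmbOfFin hT t ≤ S.orderEmbOfFin hS t) (m : ℕ) :
    cnt S m ≤ cnt T m := by
  rw [cnt_eq_card_filter hS m, cnt_eq_card_filter hT m]
  apply Finset.card_le_card
  intro r hr
  simp only [mem_filter, mem_univ, true_and] at *
  exact le_trans (h r) hr

/-- strictmono on Fin k lower bound -/
lemma strictMono_gap {k : ℕ} {f : Fin k → ℕ} (hf : StrictMono f) {t r : Fin k}
    (h : t ≤ r) : f t + ((r : ℕ) - (t : ℕ)) ≤ f r := by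
  obtain ⟨d, hd⟩ : ∃ d, (r : ℕ) = (t : ℕ) + d := ⟨(r:ℕ) - t, by omega⟩
  induction d generalizing r with
  | zero => have : t = r := Fin.ext (by omega); subst this; omega
  | succ d ih =>
    have hr' : (t : ℕ) + d < k := by omega
    have h1 := ih (r := ⟨(t : ℕ) + d, hr'⟩) (by simp [Fin.le_def]) (by simp)
    have h2 : f ⟨(t : ℕ) + d, hr'⟩ < f r := hf (by rw [Fin.lt_def]; simp; omega)
    simp only [Fin.val_mk] at h1
    omega

variable {n k : ℕ}

lemma RootA.le_def (x y : RootA n) : x ≤ y ↔ y.fst ≤ x.fst ∧ x.snd ≤ y.snd := Iff.rfl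

lemma root_one_le (x : RootA n) : 1 ≤ x.fst := (Subtype.prop x).1
lemma root_fst_lt_snd (x : RootA n) : x.fst < x.snd := (Subtype.prop x).2.1
lemma root_snd_le (x : RootA n) : x.snd ≤ n := (Subtype.prop x).2.2

lemma root_ext {x y : RootA n} (h1 : x.fst = y.fst) (h2 : x.snd = y.snd) : x = y :=
  Subtype.ext (Prod.ext h1 h2)

instance : DecidableEq (RootA n) :=
  fun a b => decidable_of_iff (Subtype.val a = Subtype.val b) Subtype.ext_iff.symm

lemma akAnti (A : AkSet (RootA n) k) : IsAntichain (· ≤ ·) (A.carrier : Set (RootA n)) :=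
  (Subtype.prop A).1

lemma akCard (A : AkSet (RootA n) k) : A.carrier.card = k := (Subtype.prop A).2

lemma akExt {A B : AkSet (RootA n) k} (h : A.carrier = B.carrier) : A = B := Subtype.ext h

lemma anti_key {A : Finset (RootA n)} (hA : IsAntichain (· ≤ ·) (A : Set (RootA n)))
    {x y : RootA n} (hx : x ∈ A) (hy : y ∈ A) (h1 : y.fst ≤ x.fst) (h2 : x.snd ≤ y.snd) :
    x = y := by
  by_contra hne
  exact hA (Finset.mem_coe.2 hx) (Finset.mem_coe.2 hy) hne ⟨h1, h2⟩

lemma anti_fst_injOn {A : Finset (RootA n)} (hA : IsAntichain (· ≤ ·) (A : Set (RootA n)))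
    {x y : RootA n} (hx : x ∈ A) (hy : y ∈ A) (h : x.fst = y.fst) : x = y := by
  rcases le_total x.snd y.snd with h2 | h2
  · exact anti_key hA hx hy h.ge h2
  · exact (anti_key hA hy hx h.le h2).symm

lemma anti_snd_injOn {A : Finset (RootA n)} (hA : IsAntichain (· ≤ ·) (A : Set (RootA n)))
    {x y : RootA n} (hx : x ∈ A) (hy : y ∈ A) (h : x.snd = y.snd) : x = y := by
  rcases le_total x.fst y.fst with h1 | h1
  · exact (anti_key hA hy hx h1 h.ge).symm
  · exact anti_key hA hx hy h1 h.le

lemma anti_mono {A : Finset (RootA n)} (hA : IsAntichain (· ≤ ·) (A : Set (RootA n)))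
    {x y : RootA n} (hx : x ∈ A) (hy : y ∈ A) (h : x.fst < y.fst) : x.snd < y.snd := by
  by_contra h2
  push_neg at h2
  have := anti_key hA hy hx h.le h2
  rw [this] at h
  exact lt_irrefl _ h

def fsts (A : Finset (RootA n)) : Finset ℕ := A.image RootA.fst
def snds (A : Finset (RootA n)) : Finset ℕ := A.image RootA.snd

lemma fsts_def (A : Finset (RootA n)) : fsts A = A.image RootA.fst := rfl
lemma snds_def (A : Finset (RootA n)) : snds A = A.image RootA.snd := rfl

lemma card_fsts (A : AkSet (RootA n) k) : (fsts A.carrier).card = k := by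
  rw [fsts_def, Finset.card_image_of_injOn (fun x hx y hy h => anti_fst_injOn (akAnti A) hx hy h)]
  exact akCard A

lemma card_snds (A : AkSet (RootA n) k) : (snds A.carrier).card = k := by
  rw [snds_def, Finset.card_image_of_injOn (fun x hx y hy h => anti_snd_injOn (akAnti A) hx hy h)]
  exact akCard A

/-- the sorted first coordinates -/
noncomputable def pF (A : AkSet (RootA n) k) : Fin k → ℕ :=
  (fsts A.carrier).orderEmbOfFin (card_fsts A)

/-- the sorted second coordinates -/
noncomputable def qF (A : AkSet (RootA n) k) : Fin k → ℕ :=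
  (snds A.carrier).orderEmbOfFin (card_snds A)

lemma pF_strictMono (A : AkSet (RootA n) k) : StrictMono (pF A) :=
  ((fsts A.carrier).orderEmbOfFin (card_fsts A)).strictMono

lemma qF_strictMono (A : AkSet (RootA n) k) : StrictMono (qF A) :=
  ((snds A.carrier).orderEmbOfFin (card_snds A)).strictMono

/-- the canonical pairing: the element with t-th smallest fst has t-th smallest snd -/
lemma pair (A : AkSet (RootA n) k) (t : Fin k) :
    ∃ x ∈ A.carrier, RootA.fst x = pF A t ∧ RootA.snd x = qF A t := by
  have hex : ∀ s : Fin k, ∃ x, x ∈ A.carrier ∧ RootA.fst x = pF A s := by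
    intro s
    have h := orderEmbOfFin_mem (fsts A.carrier) (card_fsts A) s
    obtain ⟨x, hx, hxe⟩ := Finset.mem_image.1 h
    exact ⟨x, hx, hxe⟩
  choose a ha hfa using hex
  have hsm : StrictMono (fun s => RootA.snd (a s)) := by
    intro s s' hss
    exact anti_mono (akAnti A) (ha s) (ha s') (by rw [hfa, hfa]; exact pF_strictMono A hss)
  have hmem' : ∀ s, RootA.snd (a s) ∈ snds A.carrier :=
    fun s => Finset.mem_image_of_mem _ (ha s)
  have h := orderEmbOfFin_unique (card_snds A) hmem' hsm
  exact ⟨a t, ha t, hfa t, congrFun h t⟩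

lemma pF_one_le (A : AkSet (RootA n) k) (t : Fin k) : 1 ≤ pF A t := by
  obtain ⟨x, _, hf, _⟩ := pair A t
  rw [← hf]; exact root_one_le x

lemma pF_lt_qF (A : AkSet (RootA n) k) (t : Fin k) : pF A t < qF A t := by
  obtain ⟨x, _, hf, hs⟩ := pair A t
  rw [← hf, ← hs]; exact root_fst_lt_snd x

lemma qF_le (A : AkSet (RootA n) k) (t : Fin k) : qF A t ≤ n := by
  obtain ⟨x, _, _, hs⟩ := pair A t
  rw [← hs]; exact root_snd_le x

/-- build an antichain from sorted coordinate data -/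
def mkAk (k : ℕ) (p q : Fin k → ℕ) (hp : StrictMono p) (hq : StrictMono q)
    (h1 : ∀ t, 1 ≤ p t) (hpq : ∀ t, p t < q t) (hn : ∀ t, q t ≤ n) : AkSet (RootA n) k := by
  refine ⟨univ.image (fun t => @id (RootA n) ⟨(p t, q t), h1 t, hpq t, hn t⟩), ?_, ?_⟩
  · intro x hx y hy hne hle
    simp only [Finset.coe_image, Set.mem_image, Finset.mem_coe, Finset.mem_univ] at hx hy
    obtain ⟨t, _, rfl⟩ := hx
    obtain ⟨s, _, rfl⟩ := hy
    have hts : t ≠ s := fun h => hne (by rw [h])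
    obtain ⟨hle1, hle2⟩ := hle
    rcases lt_or_gt_of_ne hts with h | h
    · exact absurd (hp h) (by change p s ≤ p t at hle1; omega)
    · exact absurd (hq h) (by change q t ≤ q s at hle2; omega)
  · rw [Finset.card_image_of_injective (f := fun t => @id (RootA n) ⟨(p t, q t), h1 t, hpq t, hn t⟩) _ (fun t s h => hp.injective
      (congrArg RootA.fst h)), card_univ, Fintype.card_fin]

lemma mkAk_carrier (k : ℕ) (p q : Fin k → ℕ) (hp : StrictMono p) (hq : StrictMono q)
    (h1 : ∀ t, 1 ≤ p t) (hpq : ∀ t, p t < q t) (hn : ∀ t, q t ≤ n) :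
    (mkAk k p q hp hq h1 hpq hn).carrier
      = univ.image (fun t => @id (RootA n) ⟨(p t, q t), h1 t, hpq t, hn t⟩) := rfl

lemma mkAk_fsts (k : ℕ) (p q : Fin k → ℕ) (hp : StrictMono p) (hq : StrictMono q)
    (h1 : ∀ t, 1 ≤ p t) (hpq : ∀ t, p t < q t) (hn : ∀ t, q t ≤ n) :
    fsts (mkAk k p q hp hq h1 hpq hn).carrier = univ.image p := by
  rw [fsts_def, mkAk_carrier, Finset.image_image]
  rfl

lemma mkAk_snds (k : ℕ) (p q : Fin k → ℕ) (hp : StrictMono p) (hq : StrictMono q)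
    (h1 : ∀ t, 1 ≤ p t) (hpq : ∀ t, p t < q t) (hn : ∀ t, q t ≤ n) :
    snds (mkAk k p q hp hq h1 hpq hn).carrier = univ.image q := by
  rw [snds_def, mkAk_carrier, Finset.image_image]
  rfl

lemma mkAk_pF (k : ℕ) (p q : Fin k → ℕ) (hp : StrictMono p) (hq : StrictMono q)
    (h1 : ∀ t, 1 ≤ p t) (hpq : ∀ t, p t < q t) (hn : ∀ t, q t ≤ n) :
    pF (mkAk k p q hp hq h1 hpq hn) = p := by
  have hm : ∀ t, p t ∈ fsts (mkAk k p q hp hq h1 hpq hn).carrier := by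
    intro t
    rw [mkAk_fsts]
    exact Finset.mem_image_of_mem _ (Finset.mem_univ t)
  exact (orderEmbOfFin_unique (card_fsts _) hm hp).symm

lemma mkAk_qF (k : ℕ) (p q : Fin k → ℕ) (hp : StrictMono p) (hq : StrictMono q)
    (h1 : ∀ t, 1 ≤ p t) (hpq : ∀ t, p t < q t) (hn : ∀ t, q t ≤ n) :
    qF (mkAk k p q hp hq h1 hpq hn) = q := by
  have hm : ∀ t, q t ∈ snds (mkAk k p q hp hq h1 hpq hn).carrier := by
    intro t
    rw [mkAk_snds]
    exact Finset.mem_image_of_mem _ (Finset.mem_univ t)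
  exact (orderEmbOfFin_unique (card_snds _) hm hq).symm

/-- every antichain is of the canonical form -/
lemma reprAk (A : AkSet (RootA n) k) :
    A = mkAk k (pF A) (qF A) (pF_strictMono A) (qF_strictMono A)
      (pF_one_le A) (pF_lt_qF A) (qF_le A) := by
  apply akExt
  symm
  apply Finset.eq_of_subset_of_card_le
  · intro x hx
    rw [mkAk_carrier, Finset.mem_image] at hx
    obtain ⟨t, _, rfl⟩ := hx
    obtain ⟨y, hy, hf, hs⟩ := pair A t
    have he : y = (⟨(pF A t, qF A t), pF_one_le A t, pF_lt_qF A t, qF_le A t⟩ : RootA n) :=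
      root_ext hf hs
    rw [← he]; exact hy
  · rw [akCard A]
    exact (akCard _).ge

lemma eq_of_coords {A B : AkSet (RootA n) k} (hf : fsts A.carrier = fsts B.carrier)
    (hs : snds A.carrier = snds B.carrier) : A = B := by
  have hp : pF B = pF A :=
    orderEmbOfFin_unique (card_fsts A)
      (fun t => by rw [hf]; exact orderEmbOfFin_mem _ _ _) (pF_strictMono B)
  have hq : qF B = qF A :=
    orderEmbOfFin_unique (card_snds A)
      (fun t => by rw [hs]; exact orderEmbOfFin_mem _ _ _) (qF_strictMono B)
  apply akExt
  have e1 := congrArg AkSet.carrier (reprAk A)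
  have e2 := congrArg AkSet.carrier (reprAk B)
  rw [e1, e2, mkAk_carrier, mkAk_carrier]
  have hfun : (fun t : Fin k =>
        @id (RootA n) ⟨(pF A t, qF A t), pF_one_le A t, pF_lt_qF A t, qF_le A t⟩)
      = (fun t : Fin k =>
        @id (RootA n) ⟨(pF B t, qF B t), pF_one_le B t, pF_lt_qF B t, qF_le B t⟩) := by
    funext t
    exact root_ext ((congrFun hp t).symm) ((congrFun hq t).symm)
  rw [hfun]

/-- counting form of the dominance order -/
def DomC (A B : Finset (RootA n)) : Prop :=
  ∀ m, cnt (fsts A) m ≤ cnt (fsts B) m ∧ cnt (snds B) m ≤ cnt (snds A) m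

lemma domC_iff (A B : AkSet (RootA n) k) :
    DomC A.carrier B.carrier ↔ ∀ t : Fin k, pF B t ≤ pF A t ∧ qF A t ≤ qF B t := by
  constructor
  · intro h t
    exact ⟨pointwise_of_cnt (card_fsts A) (card_fsts B) (fun m => (h m).1) t,
           pointwise_of_cnt (card_snds B) (card_snds A) (fun m => (h m).2) t⟩
  · intro h m
    exact ⟨cnt_of_pointwise (card_fsts A) (card_fsts B) (fun t => (h t).1) m,
           cnt_of_pointwise (card_snds B) (card_snds A) (fun t => (h t).2) m⟩

lemma cnt_image (A : Finset (RootA n)) (g : RootA n → ℕ) (hg : Set.InjOn g A) (m : ℕ) :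
    cnt (A.image g) m = (A.filter (fun x => g x ≤ m)).card := by
  rw [cnt, Finset.filter_image]
  exact Finset.card_image_of_injOn (hg.mono (fun x hx => (Finset.mem_filter.1 hx).1))

lemma cnt_split {A : Finset (RootA n)} {x : RootA n} (hx : x ∈ A) (g : RootA n → ℕ)
    (hg : Set.InjOn g A) (m : ℕ) :
    cnt (A.image g) m
      = ((A.erase x).filter (fun y => g y ≤ m)).card + (if g x ≤ m then 1 else 0) := by
  rw [cnt_image A g hg m]
  conv_lhs => rw [← Finset.insert_erase hx]
  rw [Finset.filter_insert]
  split_ifs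
  · rw [Finset.card_insert_of_notMem (fun hc => (Finset.mem_erase.1
      (Finset.mem_filter.1 hc).1).1 rfl)]
  · rw [Nat.add_zero]

lemma precK_struct {A B : AkSet (RootA n) k} (h : PrecK A B) :
    ∃ a b : RootA n, a ∈ A.carrier ∧ a ∉ B.carrier ∧ b ∈ B.carrier ∧ b ∉ A.carrier ∧
      a < b ∧ A.carrier.erase a = B.carrier.erase b := by
  obtain ⟨a, b, hAB, hBA, hab⟩ := h
  have ha : a ∈ A.carrier ∧ a ∉ B.carrier := by
    have : a ∈ ((A.carrier : Set (RootA n)) \ (B.carrier : Set (RootA n))) := by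
      rw [hAB]; rfl
    exact ⟨Finset.mem_coe.1 this.1, fun hc => this.2 (Finset.mem_coe.2 hc)⟩
  have hb : b ∈ B.carrier ∧ b ∉ A.carrier := by
    have : b ∈ ((B.carrier : Set (RootA n)) \ (A.carrier : Set (RootA n))) := by
      rw [hBA]; rfl
    exact ⟨Finset.mem_coe.1 this.1, fun hc => this.2 (Finset.mem_coe.2 hc)⟩
  refine ⟨a, b, ha.1, ha.2, hb.1, hb.2, hab, ?_⟩
  ext x
  simp only [Finset.mem_erase]
  constructor
  · rintro ⟨hxa, hxA⟩
    have hxB : x ∈ B.carrier := by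
      by_contra hxB
      have : x ∈ ((A.carrier : Set (RootA n)) \ (B.carrier : Set (RootA n))) := ⟨hxA, hxB⟩
      rw [hAB] at this
      exact hxa this
    exact ⟨fun hxb => hb.2 (hxb ▸ hxA), hxB⟩
  · rintro ⟨hxb, hxB⟩
    have hxA : x ∈ A.carrier := by
      by_contra hxA
      have : x ∈ ((B.carrier : Set (RootA n)) \ (A.carrier : Set (RootA n))) := ⟨hxB, hxA⟩
      rw [hBA] at this
      exact hxb this
    exact ⟨fun hxa => ha.2 (hxa ▸ hxB), hxA⟩

lemma prec_dom {A B : AkSet (RootA n) k} (h : PrecK A B) : DomC A.carrier B.carrier := by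
  obtain ⟨a, b, haA, haB, hbB, hbA, hab, her⟩ := precK_struct h
  have hle : b.fst ≤ a.fst ∧ a.snd ≤ b.snd := hab.le
  intro m
  constructor
  · rw [show fsts A.carrier = A.carrier.image RootA.fst from rfl,
      show fsts B.carrier = B.carrier.image RootA.fst from rfl,
      cnt_split haA RootA.fst (fun x hx y hy hh => anti_fst_injOn (akAnti A) hx hy hh) m,
      cnt_split hbB RootA.fst (fun x hx y hy hh => anti_fst_injOn (akAnti B) hx hy hh) m, her]
    have : (if RootA.fst a ≤ m then 1 else 0) ≤ (if RootA.fst b ≤ m then 1 else 0) := by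
      split_ifs with h1 h2 <;> omega
    omega
  · rw [show snds A.carrier = A.carrier.image RootA.snd from rfl,
      show snds B.carrier = B.carrier.image RootA.snd from rfl,
      cnt_split haA RootA.snd (fun x hx y hy hh => anti_snd_injOn (akAnti A) hx hy hh) m,
      cnt_split hbB RootA.snd (fun x hx y hy hh => anti_snd_injOn (akAnti B) hx hy hh) m, her]
    have : (if RootA.snd b ≤ m then 1 else 0) ≤ (if RootA.snd a ≤ m then 1 else 0) := by
      split_ifs with h1 h2 <;> omega
    omega

lemma le_dom {A B : AkSet (RootA n) k} (h : LeK A B) : DomC A.carrier B.carrier := by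
  induction h with
  | refl => exact fun m => ⟨le_rfl, le_rfl⟩
  | tail h1 h2 ih =>
    intro m
    exact ⟨le_trans (ih m).1 ((prec_dom h2) m).1, le_trans ((prec_dom h2) m).2 (ih m).2⟩

/-- the measure -/
noncomputable def muA (A : AkSet (RootA n) k) : ℕ := ∑ t : Fin k, (qF A t - pF A t)

lemma mu_le_of_dom {A B : AkSet (RootA n) k} (h : DomC A.carrier B.carrier) :
    muA A ≤ muA B := by
  rw [muA, muA]
  apply Finset.sum_le_sum
  intro t _
  have h1 := ((domC_iff A B).1 h t).1
  have h2 := ((domC_iff A B).1 h t).2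
  have h3 := pF_lt_qF A t
  omega

lemma mk_sdiff {k : ℕ} {p q p' q' : Fin k → ℕ}
    {hp : StrictMono p} {hq : StrictMono q} {h1 : ∀ t, 1 ≤ p t} {hpq : ∀ t, p t < q t}
    {hn : ∀ t, q t ≤ n}
    {hp' : StrictMono p'} {hq' : StrictMono q'} {h1' : ∀ t, 1 ≤ p' t} {hpq' : ∀ t, p' t < q' t}
    {hn' : ∀ t, q' t ≤ n} {t0 : Fin k}
    (hagree : ∀ t, t ≠ t0 → p t = p' t ∧ q t = q' t)
    (hne : ¬(p t0 = p' t0 ∧ q t0 = q' t0)) :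
    ((mkAk k p q hp hq h1 hpq hn).carrier : Set (RootA n))
      \ ((mkAk k p' q' hp' hq' h1' hpq' hn').carrier : Set (RootA n))
      = {(⟨(p t0, q t0), h1 t0, hpq t0, hn t0⟩ : RootA n)} := by
  ext x
  simp only [Set.mem_diff, Set.mem_singleton_iff, Finset.mem_coe, mkAk_carrier,
    Finset.mem_image, Finset.mem_univ, true_and]
  constructor
  · rintro ⟨⟨s, rfl⟩, hx2⟩
    by_cases hs : s = t0
    · subst hs; rfl
    · exact absurd ⟨s, root_ext ((hagree s hs).1.symm) ((hagree s hs).2.symm)⟩ hx2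
  · rintro rfl
    refine ⟨⟨t0, rfl⟩, ?_⟩
    rintro ⟨s, hs⟩
    have hf : p' s = p t0 := congrArg RootA.fst hs
    have hsn : q' s = q t0 := congrArg RootA.snd hs
    by_cases h : s = t0
    · subst h; exact hne ⟨hf.symm, hsn.symm⟩
    · have h2 : p s = p t0 := (hagree s h).1.trans hf
      exact h (hp.injective h2)

lemma dom_step {A B : AkSet (RootA n) k} (hd : DomC A.carrier B.carrier) (hne : A ≠ B) :
    ∃ C : AkSet (RootA n) k, PrecK A C ∧ DomC C.carrier B.carrier ∧ muA A < muA C := by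
  have hpt := (domC_iff A B).1 hd
  have hAs := congrArg (fun X : AkSet (RootA n) k => (X.carrier : Set (RootA n))) (reprAk A)
  -- a differing index exists
  have hex : ∃ t, ¬(pF A t = pF B t ∧ qF A t = qF B t) := by
    by_contra hc
    push_neg at hc
    apply hne
    apply eq_of_coords
    · have h1 : pF A = pF B := funext fun t => (hc t).1
      have : (fsts A.carrier : Set ℕ) = (fsts B.carrier : Set ℕ) := by
        rw [← range_orderEmbOfFin (fsts A.carrier) (card_fsts A),
          ← range_orderEmbOfFin (fsts B.carrier) (card_fsts B)]
        exact congrArg Set.range h1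
      exact Finset.coe_injective this
    · have h1 : qF A = qF B := funext fun t => by
        have := hc t
        exact this.2
      have : (snds A.carrier : Set ℕ) = (snds B.carrier : Set ℕ) := by
        rw [← range_orderEmbOfFin (snds A.carrier) (card_snds A),
          ← range_orderEmbOfFin (snds B.carrier) (card_snds B)]
        exact congrArg Set.range h1
      exact Finset.coe_injective this
  set T : Finset (Fin k) := univ.filter (fun t => ¬(pF A t = pF B t ∧ qF A t = qF B t)) with hT
  have hTne : T.Nonempty := by
    obtain ⟨t, ht⟩ := hex
    exact ⟨t, Finset.mem_filter.2 ⟨Finset.mem_univ t, ht⟩⟩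
  set t0 := T.min' hTne with ht0
  have ht0mem : ¬(pF A t0 = pF B t0 ∧ qF A t0 = qF B t0) :=
    (Finset.mem_filter.1 (T.min'_mem hTne)).2
  have hmin : ∀ t : Fin k, t < t0 → pF A t = pF B t ∧ qF A t = qF B t := by
    intro t ht
    by_contra hc
    have : t0 ≤ t := T.min'_le t (Finset.mem_filter.2 ⟨Finset.mem_univ t, hc⟩)
    exact absurd ht (not_lt.2 this)
  by_cases hcase : pF B t0 < pF A t0
  · -- Case 1 : decrease the first coordinate at t0
    set newp := Function.update (pF A) t0 (pF B t0) with hnewp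
    have hval : ∀ t, newp t = if t = t0 then pF B t0 else pF A t := by
      intro t; rw [hnewp, Function.update_apply]
    have hp' : StrictMono newp := by
      intro s s' hss
      rw [hval, hval]
      rcases eq_or_ne s t0 with rfl | hs <;> rcases eq_or_ne s' t0 with h2 | h2
      · exact absurd h2 (ne_of_gt hss)
      · simp only [if_pos rfl, if_neg h2]
        exact lt_of_le_of_lt (hpt t0).1 (pF_strictMono A hss)
      · simp only [if_neg hs, if_pos h2]
        have hst : s < t0 := h2 ▸ hss
        rw [(hmin s hst).1]
        exact pF_strictMono B hst
      · simp only [if_neg hs, if_neg h2]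
        exact pF_strictMono A hss
    have h1' : ∀ t, 1 ≤ newp t := by
      intro t; rw [hval]; split_ifs
      · exact pF_one_le B t0
      · exact pF_one_le A t
    have hpq' : ∀ t, newp t < qF A t := by
      intro t; rw [hval]; split_ifs with h
      · rw [h]; exact lt_of_le_of_lt (hpt t0).1 (pF_lt_qF A t0)
      · exact pF_lt_qF A t
    refine ⟨mkAk k newp (qF A) hp' (qF_strictMono A) h1' hpq' (qF_le A), ?_, ?_, ?_⟩
    · refine ⟨⟨(pF A t0, qF A t0), pF_one_le A t0, pF_lt_qF A t0, qF_le A t0⟩,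
        ⟨(newp t0, qF A t0), h1' t0, hpq' t0, qF_le A t0⟩, ?_, ?_, ?_⟩
      · rw [hAs]
        exact mk_sdiff (fun t ht => ⟨by rw [hval, if_neg ht], rfl⟩)
          (fun hc => by rw [hval, if_pos rfl] at hc; omega)
      · rw [hAs]
        have := mk_sdiff (p := newp) (q := qF A) (p' := pF A) (q' := qF A)
          (hp := hp') (hq := qF_strictMono A) (h1 := h1') (hpq := hpq') (hn := qF_le A)
          (hp' := pF_strictMono A) (hq' := qF_strictMono A) (h1' := pF_one_le A)
          (hpq' := pF_lt_qF A) (hn' := qF_le A) (t0 := t0)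
          (fun t ht => ⟨by rw [hval, if_neg ht], rfl⟩)
          (fun hc => by rw [hval, if_pos rfl] at hc; omega)
        exact this
      · apply lt_of_le_of_ne
        · refine ⟨?_, le_rfl⟩
          show newp t0 ≤ pF A t0
          rw [hval, if_pos rfl]
          exact le_of_lt hcase
        · intro hc
          have h2 : pF A t0 = newp t0 := congrArg RootA.fst hc
          rw [hval, if_pos rfl] at h2
          omega
    · rw [domC_iff]
      intro t
      rw [mkAk_pF, mkAk_qF, hval]
      constructor
      · split_ifs with h
        · rw [h]
        · exact (hpt t).1
      · exact (hpt t).2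
    · rw [muA, muA, mkAk_pF, mkAk_qF]
      apply Finset.sum_lt_sum
      · intro t _
        rw [hval]
        split_ifs with h
        · rw [h]
          have := pF_lt_qF A t0
          omega
        · exact le_rfl
      · refine ⟨t0, Finset.mem_univ t0, ?_⟩
        rw [hval, if_pos rfl]
        have := pF_lt_qF A t0
        omega
  · -- Case 2 : increase the second coordinate at the end of the consecutive block
    push_neg at hcase
    have hpeq : pF A t0 = pF B t0 := le_antisymm hcase (hpt t0).1
    have hqlt0 : qF A t0 < qF B t0 := by
      rcases lt_or_eq_of_le (hpt t0).2 with h | h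
      · exact h
      · exact absurd ⟨hpeq, h⟩ ht0mem
    set Sb : Finset (Fin k) :=
      univ.filter (fun s => t0 ≤ s ∧ qF A s = qF A t0 + ((s : ℕ) - (t0 : ℕ))) with hSb
    have hSbne : Sb.Nonempty := ⟨t0, by simp [hSb]⟩
    set s0 := Sb.max' hSbne with hs0def
    have hs0mem : t0 ≤ s0 ∧ qF A s0 = qF A t0 + ((s0 : ℕ) - (t0 : ℕ)) :=
      (Finset.mem_filter.1 (Sb.max'_mem hSbne)).2
    have hqlt : qF A s0 < qF B s0 := by
      have hgap := strictMono_gap (qF_strictMono B) hs0mem.1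
      omega
    obtain ⟨m0, hgt, hle, hnext⟩ : ∃ m0, qF A s0 < m0 ∧ m0 ≤ qF B s0 ∧
        ∀ (h : (s0 : ℕ) + 1 < k), m0 < qF A ⟨(s0 : ℕ) + 1, h⟩ := by
      by_cases h : (s0 : ℕ) + 1 < k
      · set s1 : Fin k := ⟨(s0 : ℕ) + 1, h⟩ with hs1
        have hstep : qF A s0 + 2 ≤ qF A s1 := by
          by_contra hc
          push_neg at hc
          have hmono : qF A s0 < qF A s1 := qF_strictMono A (by rw [Fin.lt_def]; simp [hs1])
          have heq : qF A s1 = qF A s0 + 1 := by omega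
          have hs1mem : s1 ∈ Sb := by
            rw [hSb]
            refine Finset.mem_filter.2 ⟨Finset.mem_univ _, ?_, ?_⟩
            · exact le_trans hs0mem.1 (le_of_lt (by rw [Fin.lt_def]; simp [hs1]))
            · have h0 : (t0 : ℕ) ≤ (s0 : ℕ) := hs0mem.1
              have := hs0mem.2
              rw [heq, hs1]
              simp only [Fin.val_mk]
              omega
          have := Sb.le_max' s1 hs1mem
          rw [← hs0def] at this
          have : (s1 : ℕ) ≤ (s0 : ℕ) := this
          simp [hs1] at this
        refine ⟨min (qF B s0) (qF A s1 - 1), ?_, min_le_left _ _, ?_⟩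
        · omega
        · intro h'
          have : (⟨(s0 : ℕ) + 1, h'⟩ : Fin k) = s1 := by rw [hs1]
          rw [this]
          omega
      · exact ⟨qF B s0, hqlt, le_rfl, fun h' => absurd h' h⟩
    set newq := Function.update (qF A) s0 m0 with hnewq
    have hval : ∀ t, newq t = if t = s0 then m0 else qF A t := by
      intro t; rw [hnewq, Function.update_apply]
    have hq' : StrictMono newq := by
      intro s s' hss
      rw [hval, hval]
      rcases eq_or_ne s s0 with rfl | hs <;> rcases eq_or_ne s' s0 with h2 | h2
      · exact absurd h2 (ne_of_gt hss)
      · simp only [if_pos rfl, if_neg h2]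
        have hlt : (s0 : ℕ) + 1 ≤ (s' : ℕ) := hss
        have hk : (s0 : ℕ) + 1 < k := lt_of_le_of_lt hlt (s'.2)
        have := hnext hk
        calc m0 < qF A ⟨(s0 : ℕ) + 1, hk⟩ := this
          _ ≤ qF A s' := by
            rcases eq_or_lt_of_le hlt with h3 | h3
            · exact le_of_eq (congrArg (qF A) (Fin.ext h3))
            · exact le_of_lt (qF_strictMono A (by rw [Fin.lt_def]; exact h3))
      · simp only [if_neg hs, if_pos h2]
        subst h2
        exact lt_trans (qF_strictMono A hss) hgt
      · simp only [if_neg hs, if_neg h2]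
        exact qF_strictMono A hss
    have hpq' : ∀ t, pF A t < newq t := by
      intro t; rw [hval]; split_ifs with h
      · rw [h]; exact lt_trans (pF_lt_qF A s0) hgt
      · exact pF_lt_qF A t
    have hn' : ∀ t, newq t ≤ n := by
      intro t; rw [hval]; split_ifs with h
      · exact le_trans hle (qF_le B s0)
      · exact qF_le A t
    refine ⟨mkAk k (pF A) newq (pF_strictMono A) hq' (pF_one_le A) hpq' hn', ?_, ?_, ?_⟩
    · refine ⟨⟨(pF A s0, qF A s0), pF_one_le A s0, pF_lt_qF A s0, qF_le A s0⟩,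
        ⟨(pF A s0, newq s0), pF_one_le A s0, hpq' s0, hn' s0⟩, ?_, ?_, ?_⟩
      · rw [hAs]
        exact mk_sdiff (fun t ht => ⟨rfl, by rw [hval, if_neg ht]⟩)
          (fun hc => by rw [hval, if_pos rfl] at hc; omega)
      · rw [hAs]
        exact mk_sdiff (p := pF A) (q := newq) (p' := pF A) (q' := qF A)
          (fun t ht => ⟨rfl, by rw [hval, if_neg ht]⟩)
          (fun hc => by rw [hval, if_pos rfl] at hc; omega)
      · apply lt_of_le_of_ne
        · refine ⟨le_rfl, ?_⟩
          show qF A s0 ≤ newq s0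
          rw [hval, if_pos rfl]
          exact le_of_lt hgt
        · intro hc
          have h2 : qF A s0 = newq s0 := congrArg RootA.snd hc
          rw [hval, if_pos rfl] at h2
          omega
    · rw [domC_iff]
      intro t
      rw [mkAk_pF, mkAk_qF, hval]
      refine ⟨(hpt t).1, ?_⟩
      split_ifs with h
      · rw [h]; exact hle
      · exact (hpt t).2
    · rw [muA, muA, mkAk_pF, mkAk_qF]
      apply Finset.sum_lt_sum
      · intro t _
        rw [hval]
        split_ifs with h
        · rw [h]
          have := pF_lt_qF A s0
          omega
        · exact le_rfl
      · refine ⟨s0, Finset.mem_univ s0, ?_⟩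
        rw [hval, if_pos rfl]
        have := pF_lt_qF A s0
        omega

lemma dom_to_le {A B : AkSet (RootA n) k} (hd : DomC A.carrier B.carrier) : LeK A B := by
  have H : ∀ d (X : AkSet (RootA n) k), muA B - muA X ≤ d → DomC X.carrier B.carrier →
      LeK X B := by
    intro d
    induction d with
    | zero =>
      intro X hle hdom
      by_cases he : X = B
      · rw [he]
        exact Relation.ReflTransGen.refl
      · obtain ⟨C, _, hdC, hmu⟩ := dom_step hdom he
        have := mu_le_of_dom hdC
        omega
    | succ d ih =>
      intro X hle hdom
      by_cases he : X = B
      · rw [he]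
        exact Relation.ReflTransGen.refl
      · obtain ⟨C, hprec, hdC, hmu⟩ := dom_step hdom he
        have hCB := mu_le_of_dom hdC
        exact Relation.ReflTransGen.head hprec (ih C (by omega) hdC)
  exact H (muA B - muA A) A le_rfl hd

lemma le_iff_dom {A B : AkSet (RootA n) k} : LeK A B ↔ DomC A.carrier B.carrier :=
  ⟨le_dom, dom_to_le⟩

lemma fsts_subset (A : Finset (RootA n)) : fsts A ⊆ Finset.Icc 1 (n - 1) := by
  intro x hx
  obtain ⟨a, _, rfl⟩ := Finset.mem_image.1 hx
  have h1 := root_one_le a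
  have h2 := root_fst_lt_snd a
  have h3 := root_snd_le a
  rw [Finset.mem_Icc]
  omega

lemma snds_subset (A : Finset (RootA n)) : snds A ⊆ Finset.Icc 2 n := by
  intro x hx
  obtain ⟨a, _, rfl⟩ := Finset.mem_image.1 hx
  have h1 := root_one_le a
  have h2 := root_fst_lt_snd a
  have h3 := root_snd_le a
  rw [Finset.mem_Icc]
  omega

/-- the complementary set of first coordinates -/
def dfst (A : Finset (RootA n)) : Finset ℕ := Finset.Icc 1 (n - 1) \ (snds A).image (· - 1)
/-- the complementary set of second coordinates -/
def dsnd (A : Finset (RootA n)) : Finset ℕ := Finset.Icc 2 n \ (fsts A).image (· + 1)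

lemma snds_image_subset (A : Finset (RootA n)) :
    (snds A).image (· - 1) ⊆ Finset.Icc 1 (n - 1) := by
  intro x hx
  obtain ⟨y, hy, rfl⟩ := Finset.mem_image.1 hx
  have := Finset.mem_Icc.1 (snds_subset A hy)
  rw [Finset.mem_Icc]
  omega

lemma fsts_image_subset (A : Finset (RootA n)) :
    (fsts A).image (· + 1) ⊆ Finset.Icc 2 n := by
  intro x hx
  obtain ⟨y, hy, rfl⟩ := Finset.mem_image.1 hx
  have := Finset.mem_Icc.1 (fsts_subset A hy)
  have hn1 : 1 ≤ n - 1 := by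
    rcases Finset.mem_image.1 hy with ⟨a, _, rfl⟩
    have h2 := root_fst_lt_snd a
    have h3 := root_snd_le a
    have h1 := root_one_le a
    omega
  rw [Finset.mem_Icc]
  omega

lemma card_dfst (A : AkSet (RootA n) k) : (dfst A.carrier).card = n - 1 - k := by
  rw [dfst, Finset.card_sdiff_of_subset (snds_image_subset A.carrier), Nat.card_Icc,
    Finset.card_image_of_injOn (fun x hx y hy h => by
      have hx2 := Finset.mem_Icc.1 (snds_subset A.carrier hx)
      have hy2 := Finset.mem_Icc.1 (snds_subset A.carrier hy)
      omega), card_snds A]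
  omega

lemma card_dsnd (A : AkSet (RootA n) k) : (dsnd A.carrier).card = n - 1 - k := by
  rw [dsnd, Finset.card_sdiff_of_subset (fsts_image_subset A.carrier), Nat.card_Icc,
    Finset.card_image_of_injOn (fun x hx y hy h => by omega), card_fsts A]
  omega

lemma cnt_subset {S T : Finset ℕ} (h : S ⊆ T) (m : ℕ) : cnt S m ≤ cnt T m :=
  Finset.card_le_card (Finset.filter_subset_filter _ h)

lemma cnt_sdiff (U S : Finset ℕ) (h : S ⊆ U) (m : ℕ) :
    cnt (U \ S) m = cnt U m - cnt S m := by
  rw [cnt, cnt, cnt, show (U \ S).filter (fun x => x ≤ m)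
      = U.filter (fun x => x ≤ m) \ S.filter (fun x => x ≤ m) by
    ext x
    simp only [Finset.mem_filter, Finset.mem_sdiff]
    tauto]
  exact Finset.card_sdiff_of_subset (Finset.filter_subset_filter _ h)

lemma cnt_shift_sub (S : Finset ℕ) (h1 : ∀ x ∈ S, 1 ≤ x) (m : ℕ) :
    cnt (S.image (· - 1)) m = cnt S (m + 1) := by
  rw [cnt, Finset.filter_image, cnt,
    Finset.card_image_of_injOn (fun x hx y hy h => by
      have := h1 x (Finset.mem_filter.1 hx).1
      have := h1 y (Finset.mem_filter.1 hy).1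
      omega)]
  congr 1
  apply Finset.filter_congr
  intro x hx
  have := h1 x hx
  constructor <;> (intro; omega)

lemma cnt_shift_add (S : Finset ℕ) (h1 : ∀ x ∈ S, 1 ≤ x) (m : ℕ) :
    cnt (S.image (· + 1)) m = cnt S (m - 1) := by
  rw [cnt, Finset.filter_image, cnt,
    Finset.card_image_of_injOn (fun x hx y hy h => by omega)]
  congr 1
  apply Finset.filter_congr
  intro x hx
  have := h1 x hx
  constructor <;> (intro; omega)

lemma Icc_shift (hn : 2 ≤ n) : (Finset.Icc 1 (n - 1)).image (· + 1) = Finset.Icc 2 n := by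
  ext x
  simp only [Finset.mem_image, Finset.mem_Icc]
  constructor
  · rintro ⟨y, hy, rfl⟩
    omega
  · intro hx
    exact ⟨x - 1, by omega, by omega⟩

lemma cnt_Icc_shift (hn : 2 ≤ n) (m : ℕ) :
    cnt (Finset.Icc 2 n) (m + 1) = cnt (Finset.Icc 1 (n - 1)) m := by
  rw [← Icc_shift hn, cnt_shift_add _ (fun x hx => (Finset.mem_Icc.1 hx).1),
    Nat.add_sub_cancel]

/-- the key antichain inequality in counting form -/
lemma cnt_snds_le_fsts (A : AkSet (RootA n) k) (m : ℕ) :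
    cnt (snds A.carrier) (m + 1) ≤ cnt (fsts A.carrier) m := by
  rw [cnt_eq_card_filter (card_snds A), cnt_eq_card_filter (card_fsts A)]
  apply Finset.card_le_card
  intro r hr
  simp only [Finset.mem_filter, Finset.mem_univ, true_and] at *
  have h1 := pF_lt_qF A r
  show pF A r ≤ m
  have h2 : qF A r ≤ m + 1 := hr
  omega

lemma cnt_dfst (hn : 2 ≤ n) (A : AkSet (RootA n) k) (m : ℕ) :
    cnt (dfst A.carrier) m = cnt (Finset.Icc 1 (n - 1)) m - cnt (snds A.carrier) (m + 1) := by
  rw [dfst, cnt_sdiff _ _ (snds_image_subset A.carrier),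
    cnt_shift_sub _ (fun x hx => by have := Finset.mem_Icc.1 (snds_subset A.carrier hx); omega)]

lemma cnt_dsnd (hn : 2 ≤ n) (A : AkSet (RootA n) k) (m : ℕ) :
    cnt (dsnd A.carrier) m = cnt (Finset.Icc 2 n) m - cnt (fsts A.carrier) (m - 1) := by
  rw [dsnd, cnt_sdiff _ _ (fsts_image_subset A.carrier),
    cnt_shift_add _ (fun x hx => by have := Finset.mem_Icc.1 (fsts_subset A.carrier hx); omega)]

lemma image_orderEmbOfFin {S : Finset ℕ} {j : ℕ} (h : S.card = j) :
    univ.image (S.orderEmbOfFin h) = S := by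
  apply Finset.coe_injective
  rw [Finset.coe_image, Finset.coe_univ, Set.image_univ, range_orderEmbOfFin]

/-- sorted first coordinates of the dual -/
noncomputable def pD {j : ℕ} (hj : n - 1 - k = j) (A : AkSet (RootA n) k) : Fin j → ℕ :=
  (dfst A.carrier).orderEmbOfFin (hj ▸ card_dfst A)

/-- sorted second coordinates of the dual -/
noncomputable def qD {j : ℕ} (hj : n - 1 - k = j) (A : AkSet (RootA n) k) : Fin j → ℕ :=
  (dsnd A.carrier).orderEmbOfFin (hj ▸ card_dsnd A)

lemma pD_mem {j : ℕ} (hj : n - 1 - k = j) (A : AkSet (RootA n) k) (t : Fin j) :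
    pD hj A t ∈ dfst A.carrier := orderEmbOfFin_mem _ _ _

lemma qD_mem {j : ℕ} (hj : n - 1 - k = j) (A : AkSet (RootA n) k) (t : Fin j) :
    qD hj A t ∈ dsnd A.carrier := orderEmbOfFin_mem _ _ _

lemma pD_one_le {j : ℕ} (hj : n - 1 - k = j) (A : AkSet (RootA n) k) (t : Fin j) :
    1 ≤ pD hj A t := by
  have := (Finset.mem_sdiff.1 (pD_mem hj A t)).1
  exact (Finset.mem_Icc.1 this).1

lemma qD_le {j : ℕ} (hj : n - 1 - k = j) (A : AkSet (RootA n) k) (t : Fin j) :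
    qD hj A t ≤ n := by
  have := (Finset.mem_sdiff.1 (qD_mem hj A t)).1
  exact (Finset.mem_Icc.1 this).2

lemma qD_two_le {j : ℕ} (hj : n - 1 - k = j) (A : AkSet (RootA n) k) (t : Fin j) :
    2 ≤ qD hj A t := by
  have := (Finset.mem_sdiff.1 (qD_mem hj A t)).1
  exact (Finset.mem_Icc.1 this).1

lemma pD_lt_qD (hn : 2 ≤ n) {j : ℕ} (hj : n - 1 - k = j) (A : AkSet (RootA n) k) (t : Fin j) :
    pD hj A t < qD hj A t := by
  -- the shifted second coordinates
  have hcard : ((dsnd A.carrier).image (· - 1)).card = j := by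
    rw [Finset.card_image_of_injOn (fun x hx y hy h => by
      have hx2 := (Finset.mem_Icc.1 (Finset.mem_sdiff.1 hx).1).1
      have hy2 := (Finset.mem_Icc.1 (Finset.mem_sdiff.1 hy).1).1
      omega), card_dsnd A, hj]
  have hq : (fun t => qD hj A t - 1) = ((dsnd A.carrier).image (· - 1)).orderEmbOfFin hcard := by
    apply orderEmbOfFin_unique
    · intro t
      exact Finset.mem_image_of_mem _ (qD_mem hj A t)
    · intro s s' hss
      have h1 := qD_two_le hj A s
      have h2 : qD hj A s < qD hj A s' :=
        ((dsnd A.carrier).orderEmbOfFin (hj ▸ card_dsnd A)).strictMono hss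
      show qD hj A s - 1 < qD hj A s' - 1
      omega
  have hcnt : ∀ m, cnt ((dsnd A.carrier).image (· - 1)) m ≤ cnt (dfst A.carrier) m := by
    intro m
    rw [cnt_shift_sub _ (fun x hx => by
        have := (Finset.mem_Icc.1 (Finset.mem_sdiff.1 hx).1).1; omega),
      cnt_dfst hn A, cnt_dsnd hn A, cnt_Icc_shift hn]
    simp only [Nat.add_sub_cancel]
    have h1 := cnt_snds_le_fsts A m
    have h2 : cnt (fsts A.carrier) m ≤ cnt (Finset.Icc 1 (n - 1)) m :=
      cnt_subset (fsts_subset A.carrier) m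
    omega
  have := pointwise_of_cnt hcard (hj ▸ card_dfst A) hcnt t
  rw [← hq] at this
  have h2 := qD_two_le hj A t
  show pD hj A t < qD hj A t
  have h3 : pD hj A t ≤ qD hj A t - 1 := this
  omega

lemma pD_strictMono {j : ℕ} (hj : n - 1 - k = j) (A : AkSet (RootA n) k) :
    StrictMono (pD hj A) := ((dfst A.carrier).orderEmbOfFin (hj ▸ card_dfst A)).strictMono

lemma qD_strictMono {j : ℕ} (hj : n - 1 - k = j) (A : AkSet (RootA n) k) :
    StrictMono (qD hj A) := ((dsnd A.carrier).orderEmbOfFin (hj ▸ card_dsnd A)).strictMono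

/-- Panyushev complementation -/
noncomputable def dualAk (hn : 2 ≤ n) {j : ℕ} (hj : n - 1 - k = j) (A : AkSet (RootA n) k) :
    AkSet (RootA n) j :=
  mkAk j (pD hj A) (qD hj A) (pD_strictMono hj A) (qD_strictMono hj A)
    (pD_one_le hj A) (pD_lt_qD hn hj A) (qD_le hj A)

lemma dualAk_fsts (hn : 2 ≤ n) {j : ℕ} (hj : n - 1 - k = j) (A : AkSet (RootA n) k) :
    fsts (dualAk hn hj A).carrier = dfst A.carrier := by
  rw [dualAk, mkAk_fsts]
  exact image_orderEmbOfFin _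

lemma dualAk_snds (hn : 2 ≤ n) {j : ℕ} (hj : n - 1 - k = j) (A : AkSet (RootA n) k) :
    snds (dualAk hn hj A).carrier = dsnd A.carrier := by
  rw [dualAk, mkAk_snds]
  exact image_orderEmbOfFin _

lemma image_sub_one_sdiff (hn : 2 ≤ n) (S : Finset ℕ) (hS : S ⊆ Finset.Icc 1 (n - 1)) :
    (Finset.Icc 2 n \ S.image (· + 1)).image (· - 1) = Finset.Icc 1 (n - 1) \ S := by
  ext x
  simp only [Finset.mem_image, Finset.mem_sdiff, Finset.mem_Icc, not_exists]
  constructor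
  · rintro ⟨y, ⟨⟨hy1, hy2⟩, hy3⟩, rfl⟩
    refine ⟨⟨by omega, by omega⟩, fun hx => ?_⟩
    exact hy3 (y - 1) ⟨hx, by omega⟩
  · rintro ⟨⟨h1, h2⟩, hx⟩
    refine ⟨x + 1, ⟨⟨by omega, by omega⟩, fun z hz => ?_⟩, by omega⟩
    have h3 := hz.2
    have : z = x := by omega
    exact hx (this ▸ hz.1)

lemma image_add_one_sdiff (hn : 2 ≤ n) (S : Finset ℕ) (hS : S ⊆ Finset.Icc 2 n) :
    (Finset.Icc 1 (n - 1) \ S.image (· - 1)).image (· + 1) = Finset.Icc 2 n \ S := by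
  ext x
  simp only [Finset.mem_image, Finset.mem_sdiff, Finset.mem_Icc, not_exists]
  constructor
  · rintro ⟨y, ⟨⟨hy1, hy2⟩, hy3⟩, rfl⟩
    refine ⟨⟨by omega, by omega⟩, fun hx => ?_⟩
    exact hy3 (y + 1) ⟨hx, by omega⟩
  · rintro ⟨⟨h1, h2⟩, hx⟩
    refine ⟨x - 1, ⟨⟨by omega, by omega⟩, fun z hz => ?_⟩, by omega⟩
    have h3 := hz.2
    have h4 := Finset.mem_Icc.1 (hS hz.1)
    have : z = x := by omega
    exact hx (this ▸ hz.1)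

lemma dual_dual (hn : 2 ≤ n) {j : ℕ} (hj : n - 1 - k = j) (hjk : n - 1 - j = k)
    (A : AkSet (RootA n) k) : dualAk hn hjk (dualAk hn hj A) = A := by
  apply eq_of_coords
  · rw [dualAk_fsts hn hjk, dfst, dualAk_snds hn hj, dsnd,
      image_sub_one_sdiff hn (fsts A.carrier) (fsts_subset A.carrier),
      Finset.sdiff_sdiff_self_left, Finset.inter_eq_right.2 (fsts_subset A.carrier)]
  · rw [dualAk_snds hn hjk, dsnd, dualAk_fsts hn hj, dfst,
      image_add_one_sdiff hn (snds A.carrier) (snds_subset A.carrier),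
      Finset.sdiff_sdiff_self_left, Finset.inter_eq_right.2 (snds_subset A.carrier)]

lemma dom_dual (hn : 2 ≤ n) {j : ℕ} (hj : n - 1 - k = j) {A B : AkSet (RootA n) k}
    (h : DomC A.carrier B.carrier) :
    DomC (dualAk hn hj A).carrier (dualAk hn hj B).carrier := by
  intro m
  constructor
  · rw [dualAk_fsts hn hj, dualAk_fsts hn hj, cnt_dfst hn, cnt_dfst hn]
    exact Nat.sub_le_sub_left (h (m + 1)).2 _
  · rw [dualAk_snds hn hj, dualAk_snds hn hj, cnt_dsnd hn, cnt_dsnd hn]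
    exact Nat.sub_le_sub_left (h (m - 1)).1 _

end Pany

open Pany in
/-- Panyushev's complementation `*` on antichains of the type `A_{n-1}` root poset:
for `0 ≤ k ≤ n-1`, the map sending an antichain `A = {[i₁,j₁],…,[i_k,j_k]}` to the
unique antichain `A*` of size `n-1-k` whose first indices form the set
`{1,…,n-1} \ {j₁-1,…,j_k-1}` and whose second indices form the set
`{2,…,n} \ {i₁+1,…,i_k+1}` (paired in increasing order; for an antichain of this
poset, the pairing of the two increasing coordinate lists is forced) is a poset
isomorphism `(A_k(Φ⁺), ≤_k) ≅ (A_{n-1-k}(Φ⁺), ≤_{n-1-k})`; in particular it maps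
covering relations to covering relations. -/
theorem stmt19 (n k : ℕ) (hn : 2 ≤ n) (hk : k ≤ n - 1) :
    ∃ e : AkSet (RootA n) k ≃o AkSet (RootA n) (n - 1 - k),
      (∀ A : AkSet (RootA n) k,
        RootA.fst '' ((e A).carrier : Set (RootA n)) =
          Set.Icc 1 (n - 1) \ ((fun p => p.snd - 1) '' (A.carrier : Set (RootA n))) ∧
        RootA.snd '' ((e A).carrier : Set (RootA n)) =
          Set.Icc 2 n \ ((fun p => p.fst + 1) '' (A.carrier : Set (RootA n)))) ∧
      (∀ A' A : AkSet (RootA n) k, CovK A' A → CovK (e A') (e A)) := by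
  have hjk : n - 1 - (n - 1 - k) = k := by omega
  let F : AkSet (RootA n) k → AkSet (RootA n) (n - 1 - k) := dualAk hn rfl
  let G : AkSet (RootA n) (n - 1 - k) → AkSet (RootA n) k := dualAk hn hjk
  have hGF : ∀ A, G (F A) = A := fun A => dual_dual hn rfl hjk A
  have hFG : ∀ B, F (G B) = B := fun B => dual_dual hn hjk rfl B
  have hmap : ∀ A B : AkSet (RootA n) k, LeK (F A) (F B) ↔ LeK A B := by
    intro A B
    rw [le_iff_dom, le_iff_dom]
    constructor
    · intro h
      have h2 := dom_dual hn hjk h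
      rw [show dualAk hn hjk (F A) = A from hGF A,
        show dualAk hn hjk (F B) = B from hGF B] at h2
      exact h2
    · intro h
      exact dom_dual hn rfl h
  let e : AkSet (RootA n) k ≃o AkSet (RootA n) (n - 1 - k) :=
    { toEquiv := ⟨F, G, hGF, hFG⟩
      map_rel_iff' := @fun A B => hmap A B }
  have heF : ∀ A, e A = F A := fun A => rfl
  refine ⟨e, fun A => ?_, ?_⟩
  · constructor
    · calc RootA.fst '' ((e A).carrier : Set (RootA n))
          = ((fsts (F A).carrier : Finset ℕ) : Set ℕ) := by
            rw [heF, fsts_def, Finset.coe_image]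
        _ = ((dfst A.carrier : Finset ℕ) : Set ℕ) := by rw [dualAk_fsts hn rfl A]
        _ = Set.Icc 1 (n - 1) \ ((fun p => p.snd - 1) '' (A.carrier : Set (RootA n))) := by
            rw [dfst, Finset.coe_sdiff, Finset.coe_Icc, Finset.coe_image, snds_def,
              Finset.coe_image, Set.image_image]
    · calc RootA.snd '' ((e A).carrier : Set (RootA n))
          = ((snds (F A).carrier : Finset ℕ) : Set ℕ) := by
            rw [heF, snds_def, Finset.coe_image]
        _ = ((dsnd A.carrier : Finset ℕ) : Set ℕ) := by rw [dualAk_snds hn rfl A]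
        _ = Set.Icc 2 n \ ((fun p => p.fst + 1) '' (A.carrier : Set (RootA n))) := by
            rw [dsnd, Finset.coe_sdiff, Finset.coe_Icc, Finset.coe_image, fsts_def,
              Finset.coe_image, Set.image_image]
  · intro A' A hcov
    have hlt : ∀ X Y : AkSet (RootA n) k, LtK X Y ↔ LtK (e X) (e Y) := by
      intro X Y
      constructor
      · rintro ⟨h1, h2⟩
        refine ⟨(hmap X Y).2 h1, fun hc => h2 ?_⟩
        have h3 := congrArg G hc
        rw [show G (e X) = G (F X) from rfl, show G (e Y) = G (F Y) from rfl,
          hGF, hGF] at h3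
        exact h3
      · rintro ⟨h1, h2⟩
        exact ⟨(hmap X Y).1 h1, fun hc => h2 (congrArg F hc)⟩
    refine ⟨(hlt A' A).1 hcov.1, ?_⟩
    intro C h1 h2
    have hC : e (G C) = C := hFG C
    rw [← hC] at h1 h2
    exact hcov.2 (G C) ((hlt A' (G C)).2 h1) ((hlt (G C) A).2 h2)
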